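/- Let 0 < q ≤ 2, let A be an m × n real matrix, let y ∈ ℝ^m, and let x_k ∈ ℝ^n be such that (A x_k − y)_i ≠ 0 for every index i. Define weights w_i = |(A x_k − y)_i|^((q−2)/2). Then: (1) for every x ∈ ℝ^n, ∑_i |(A x − y)_i|^q ≤ (q/2)·∑_i (w_i · (A x − y)_i)² + ((2−q)/2)·∑_i |(A x_k − y)_i|^q; and (2) equality holds at x = x_k, i.e. ∑_i |(A x_k − y)_i|^q = (q/2)·∑_i (w_i · (A x_k − y)_i)² + ((2−q)/2)·∑_i |(A x_k − y)_i|^q. -/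
import Mathlib

lemma irls_key (q a b : ℝ) (hq0 : 0 < q) (hq2 : q ≤ 2) (ha : 0 ≤ a) (hb : 0 < b) :
    a ^ q ≤ q / 2 * (b ^ (q - 2) * a ^ (2 : ℝ)) + (2 - q) / 2 * b ^ q := by
  have h := Real.geom_mean_le_arith_mean2_weighted
    (w₁ := q / 2) (w₂ := (2 - q) / 2) (p₁ := b ^ (q - 2) * a ^ (2 : ℝ)) (p₂ := b ^ q)
    (by linarith) (by linarith)
    (mul_nonneg (Real.rpow_nonneg hb.le _) (Real.rpow_nonneg ha _))
    (Real.rpow_nonneg hb.le _) (by ring)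
  calc a ^ q = (b ^ (q - 2) * a ^ (2 : ℝ)) ^ (q / 2) * (b ^ q) ^ ((2 - q) / 2) := by
        rw [Real.mul_rpow (Real.rpow_nonneg hb.le _) (Real.rpow_nonneg ha _),
          ← Real.rpow_mul hb.le, ← Real.rpow_mul ha, ← Real.rpow_mul hb.le,
          mul_right_comm, ← Real.rpow_add hb,
          show (q - 2) * (q / 2) + q * ((2 - q) / 2) = 0 by ring,
          show (2 : ℝ) * (q / 2) = q by ring, Real.rpow_zero, one_mul]
    _ ≤ _ := h

/-- Unperturbed Lemma 2: the reweighted least-squares surrogate majorizes the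
ℓq term everywhere and is tangent (touches) at the current iterate `xk`. -/
theorem irls_surrogate_majorizes_and_touches {m n : ℕ} (q : ℝ) (hq0 : 0 < q)
    (hq2 : q ≤ 2) (A : Matrix (Fin m) (Fin n) ℝ) (y : Fin m → ℝ) (xk : Fin n → ℝ)
    (hres : ∀ i, (A.mulVec xk - y) i ≠ 0) (w : Fin m → ℝ)
    (hw : ∀ i, w i = |(A.mulVec xk - y) i| ^ ((q - 2) / 2)) :
    (∀ x : Fin n → ℝ,
      ∑ i, |(A.mulVec x - y) i| ^ q ≤
        q / 2 * ∑ i, (w i * (A.mulVec x - y) i) ^ 2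
          + (2 - q) / 2 * ∑ i, |(A.mulVec xk - y) i| ^ q) ∧
    (∑ i, |(A.mulVec xk - y) i| ^ q =
        q / 2 * ∑ i, (w i * (A.mulVec xk - y) i) ^ 2
          + (2 - q) / 2 * ∑ i, |(A.mulVec xk - y) i| ^ q) := by
  have hb : ∀ i, (0:ℝ) < |(A.mulVec xk - y) i| := fun i => abs_pos.mpr (hres i)
  have hwsq : ∀ i (r : ℝ), (w i * r) ^ 2 = |(A.mulVec xk - y) i| ^ (q - 2) * |r| ^ (2:ℝ) := by
    intro i r
    rw [hw i, mul_pow, ← sq_abs r,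
      ← Real.rpow_natCast (|(A.mulVec xk - y) i| ^ ((q-2)/2)),
      ← Real.rpow_mul (abs_nonneg _), ← Real.rpow_natCast |r| 2]
    norm_num
  constructor
  · intro x
    rw [Finset.mul_sum, Finset.mul_sum, ← Finset.sum_add_distrib]
    apply Finset.sum_le_sum
    intro i _
    rw [hwsq]
    exact irls_key q _ _ hq0 hq2 (abs_nonneg _) (hb i)
  · have : ∀ i, (w i * (A.mulVec xk - y) i) ^ 2 = |(A.mulVec xk - y) i| ^ q := by
      intro i
      rw [hwsq, ← Real.rpow_add (hb i)]
      norm_num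
    simp only [this]
    ring
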